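/- Let α ≥ 1 and let (x, y, u, v) be a solution of x' = u, y' = v₀|x|^{2α}, u' = -αv₀²|x|^{2(α-1)}x, v = v₀ with v₀ ≠ 0, given by x(t) = A sin_α(ωt + φ), u(t) = Aω cos_α(ωt + φ) with ω² = v₀² A^{2(α-1)}. Then y(t) = y₀ + v₀ A^{2α}/((α+1)ω²) · (ω²t + ω cos_α(φ)sin_α(φ) − ω cos_α(ωt+φ) sin_α(ωt+φ)). -/

import Mathlib

open Set

/-- the vertical coordinate of a geodesic of the `α`-Grushin plane.  Given the
generalized trigonometric functions `s = sin_α`, `c = cos_α` (with `s' = c`,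
`c' = -α|s|^{2α-2}s` and `|s|^{2α} + c² = 1`), parameters `A > 0`, `ω ≠ 0` with
`ω² = v₀² A^{2(α-1)}`, and `y` solving `y' = v₀ ((A s(ωt+φ))²)^α` with `y(0) = y₀`, one has the
stated closed formula for `y(t)`. -/
theorem stmt_7 (α : ℝ) (hα : 1 ≤ α) (s c : ℝ → ℝ)
    (hs : ∀ t, HasDerivAt s (c t) t)
    (hc : ∀ t, HasDerivAt c (-α * |s t| ^ (2 * α - 2) * s t) t)
    (hpyth : ∀ t, ((s t) ^ 2) ^ α + (c t) ^ 2 = 1)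
    (A ω φ v₀ y₀ : ℝ) (hA : 0 < A) (hω : ω ≠ 0) (hv₀ : v₀ ≠ 0)
    (hrel : ω ^ 2 = v₀ ^ 2 * (A ^ 2) ^ (α - 1))
    (y : ℝ → ℝ) (hy0 : y 0 = y₀)
    (hy : ∀ t, HasDerivAt y (v₀ * ((A * s (ω * t + φ)) ^ 2) ^ α) t) :
    ∀ t, y t = y₀ + v₀ * (A ^ 2) ^ α / ((α + 1) * ω ^ 2) *
      (ω ^ 2 * t + ω * c φ * s φ - ω * c (ω * t + φ) * s (ω * t + φ)) := by
  have hα1 : (0:ℝ) < α + 1 := by linarith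
  set g : ℝ → ℝ := fun t => y₀ + v₀ * (A ^ 2) ^ α / ((α + 1) * ω ^ 2) *
      (ω ^ 2 * t + ω * c φ * s φ - ω * c (ω * t + φ) * s (ω * t + φ)) with hg
  -- key pointwise identity: |s u|^(2α-2) * s u ^ 2 = (s u ^ 2)^α
  have key : ∀ u : ℝ, |s u| ^ (2 * α - 2) * s u ^ 2 = ((s u) ^ 2) ^ α := by
    intro u
    rcases eq_or_ne (s u) 0 with h | h
    · simp [h, Real.zero_rpow (by positivity : α ≠ 0)]
    · have habs : (0:ℝ) < |s u| := abs_pos.mpr h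
      have h1 : ((s u) ^ 2 : ℝ) ^ α = |s u| ^ (2 * α) := by
        rw [← sq_abs, ← Real.rpow_natCast |s u| 2, ← Real.rpow_mul habs.le]
        norm_num
      rw [h1, ← sq_abs (s u), ← Real.rpow_natCast |s u| 2, ← Real.rpow_add habs]
      norm_num
  have hgd : ∀ t, HasDerivAt g (v₀ * ((A * s (ω * t + φ)) ^ 2) ^ α) t := by
    intro t
    set u := ω * t + φ with hu
    have hlin : HasDerivAt (fun t : ℝ => ω * t + φ) ω t := by
      simpa using ((hasDerivAt_id t).const_mul ω).add_const φ
    have hcs : HasDerivAt (fun t => c (ω * t + φ) * s (ω * t + φ))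
        ((-α * |s u| ^ (2 * α - 2) * s u * ω) * s u + c u * (c u * ω)) t := by
      exact ((hc u).comp t hlin).mul ((hs u).comp t hlin)
    have h1 : HasDerivAt (fun t => ω ^ 2 * t + ω * c φ * s φ
        - ω * c (ω * t + φ) * s (ω * t + φ))
        (ω ^ 2 - ω * ((-α * |s u| ^ (2 * α - 2) * s u * ω) * s u + c u * (c u * ω))) t := by
      have := (((hasDerivAt_id t).const_mul (ω ^ 2)).add_const (ω * c φ * s φ)).sub
        ((hcs.const_mul ω))
      simpa [mul_assoc, Pi.sub_def] using this
    have hder := (h1.const_mul (v₀ * (A ^ 2) ^ α / ((α + 1) * ω ^ 2))).const_add y₀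
    convert hder using 1
    · rfl
    · rfl
    have hsq : ((A * s u) ^ 2 : ℝ) ^ α = (A ^ 2) ^ α * ((s u) ^ 2) ^ α := by
      rw [mul_pow, Real.mul_rpow (by positivity) (by positivity)]
    have hc2 : (c u) ^ 2 = 1 - ((s u) ^ 2) ^ α := by
      have := hpyth u; linarith
    have hk := key u
    have hX : ω * (-α * |s u| ^ (2 * α - 2) * s u * ω * s u + c u * (c u * ω))
        = ω ^ 2 * (1 - (α + 1) * ((s u) ^ 2) ^ α) := by
      linear_combination ω ^ 2 * hc2 - α * ω ^ 2 * hk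
    rw [hsq, hX]
    field_simp
    ring
  have hconst : ∀ t, y t - g t = y 0 - g 0 := by
    intro t
    have hdiff : ∀ x, HasDerivAt (fun x => y x - g x) 0 x := by
      intro x
      simpa [Pi.sub_def] using (hy x).sub (hgd x)
    have : Differentiable ℝ (fun x => y x - g x) := fun x => (hdiff x).differentiableAt
    exact is_const_of_deriv_eq_zero this (fun x => (hdiff x).deriv) t 0
  intro t
  have h0 : g 0 = y₀ := by
    simp only [hg]
    ring
  have := hconst t
  rw [hy0, h0] at this
  have : y t = g t := by linarith
  rw [this]
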